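/- Let a > 0, r ∈ (0,1), and let f ∈ C²([0,r]) solve the profile equation on (0,r] with f(0) = a, f'(0) = 0. Assume in addition that f''(x) < 0 and f(x) > 0 for all x ∈ [0,r]. Then, for every x ∈ (0,r], one has a√(1 - x²) < f(x) < a and -ax/(1 - x²) < f'(x) < 0. -/

import Mathlib

open Set

/-- `f ∈ C²(S)` solves the profile equation
`f''(x) = (1 + f'(x)²)[f'(x)(x - 1/x) - f(x)]` for `x ∈ S \ {0}`,
with initial data `f(0) = a`, `f'(0) = 0`. -/
def SolvesProfile (a : ℝ) (S : Set ℝ) (f : ℝ → ℝ) : Prop :=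
  ContDiffOn ℝ 2 f S ∧ f 0 = a ∧ derivWithin f S 0 = 0 ∧
  ∀ x ∈ S, x ≠ 0 →
    derivWithin (derivWithin f S) S x
      = (1 + (derivWithin f S x) ^ 2) * (derivWithin f S x * (x - 1 / x) - f x)

/-- If `f ∈ C²([0,r])` (`0 < r < 1`) solves the profile equation with `f(0) = a > 0`,
`f'(0) = 0`, and `f'' < 0`, `f > 0` on `[0,r]`, then for `x ∈ (0,r]`:
`a√(1-x²) < f(x) < a` and `-ax/(1-x²) < f'(x) < 0`. -/
theorem profile_bounds (a r : ℝ) (ha : 0 < a) (hr0 : 0 < r) (hr1 : r < 1)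
    (f : ℝ → ℝ) (hf : SolvesProfile a (Icc 0 r) f)
    (hconc : ∀ x ∈ Icc (0:ℝ) r, derivWithin (derivWithin f (Icc 0 r)) (Icc 0 r) x < 0)
    (hpos : ∀ x ∈ Icc (0:ℝ) r, 0 < f x) :
    ∀ x ∈ Ioc (0:ℝ) r,
      a * Real.sqrt (1 - x ^ 2) < f x ∧ f x < a ∧
      -(a * x) / (1 - x ^ 2) < derivWithin f (Icc 0 r) x ∧
      derivWithin f (Icc 0 r) x < 0 := by
  set s : Set ℝ := Icc (0:ℝ) r with hs
  set g : ℝ → ℝ := derivWithin f s with hgdef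
  obtain ⟨hC, hf0, hg0, hode⟩ := hf
  have hud : UniqueDiffOn ℝ s := uniqueDiffOn_Icc hr0
  have hfd : DifferentiableOn ℝ f s := hC.differentiableOn (by norm_num)
  have hfc : ContinuousOn f s := hfd.continuousOn
  have hgC : ContDiffOn ℝ 1 g s := hC.derivWithin hud (by norm_num)
  have hgd : DifferentiableOn ℝ g s := hgC.differentiableOn (by norm_num)
  have hgc : ContinuousOn g s := hgd.continuousOn
  have hint : interior s = Ioo (0:ℝ) r := interior_Icc
  -- within-derivatives agree with full derivatives on the interior
  have hnhds : ∀ x ∈ Ioo (0:ℝ) r, s ∈ nhds x := fun x hx => Icc_mem_nhds hx.1 hx.2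
  have hderiv_f : ∀ x ∈ Ioo (0:ℝ) r, deriv f x = g x := by
    intro x hx
    exact (derivWithin_of_mem_nhds (hnhds x hx)).symm
  have hderiv_g : ∀ x ∈ Ioo (0:ℝ) r, deriv g x = derivWithin g s x := by
    intro x hx
    exact (derivWithin_of_mem_nhds (hnhds x hx)).symm
  have hIoo_sub : Ioo (0:ℝ) r ⊆ s := Ioo_subset_Icc_self
  -- g is strictly decreasing, hence g < 0 on (0,r]
  have hganti : StrictAntiOn g s := by
    apply strictAntiOn_of_deriv_neg (convex_Icc 0 r) hgc
    intro x hx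
    rw [hint] at hx
    rw [hderiv_g x hx]
    exact hconc x (hIoo_sub hx)
  have hgneg : ∀ x ∈ Ioc (0:ℝ) r, g x < 0 := by
    intro x hx
    have hg0' : g 0 = 0 := hg0
    have := hganti (left_mem_Icc.2 hr0.le) ⟨hx.1.le, hx.2⟩ hx.1
    rwa [hg0'] at this
  -- f is strictly decreasing, hence f < a on (0,r]
  have hfanti : StrictAntiOn f s := by
    apply strictAntiOn_of_deriv_neg (convex_Icc 0 r) hfc
    intro x hx
    rw [hint] at hx
    rw [hderiv_f x hx]
    exact hgneg x ⟨hx.1, hx.2.le⟩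
  have hflt : ∀ x ∈ Ioc (0:ℝ) r, f x < a := by
    intro x hx
    have := hfanti (left_mem_Icc.2 hr0.le) ⟨hx.1.le, hx.2⟩ hx.1
    rwa [hf0] at this
  -- pointwise key inequality from concavity and the ODE
  have hkey : ∀ x ∈ Ioc (0:ℝ) r, g x * (x ^ 2 - 1) < x * f x := by
    intro x hx
    have hxs : x ∈ s := ⟨hx.1.le, hx.2⟩
    have h1 := hconc x hxs
    rw [hode x hxs (ne_of_gt hx.1)] at h1
    have hsq : (0:ℝ) < 1 + (g x) ^ 2 := by positivity
    have hbr : g x * (x - 1 / x) - f x < 0 := by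
      by_contra h
      push_neg at h
      nlinarith
    have hx0 : (0:ℝ) < x := hx.1
    have h2 : x * (g x * (x - 1 / x)) < x * f x := by nlinarith
    have h3 : x * (x - 1 / x) = x ^ 2 - 1 := by field_simp
    have h4 : x * (g x * (x - 1 / x)) = g x * (x ^ 2 - 1) := by rw [← h3]; ring
    linarith [h2, h4]
  have h1x2 : ∀ x ∈ Ioc (0:ℝ) r, (0:ℝ) < 1 - x ^ 2 := by
    intro x hx
    nlinarith [hx.1, hx.2, hr1]
  -- the derivative lower bound
  have hgbd : ∀ x ∈ Ioc (0:ℝ) r, -(a * x) / (1 - x ^ 2) < g x := by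
    intro x hx
    have h1 := h1x2 x hx
    rw [div_lt_iff₀ h1]
    have hk := hkey x hx
    have hfa := hflt x hx
    nlinarith [hx.1]
  -- the auxiliary increasing function ψ x = f x ^ 2 / (1 - x²)
  set ψ : ℝ → ℝ := fun x => f x ^ 2 * (1 - x ^ 2)⁻¹ with hψdef
  have h1x2' : ∀ x ∈ s, (0:ℝ) < 1 - x ^ 2 := by
    intro x hx
    rcases hx with ⟨hx0, hxr⟩
    nlinarith
  have hψc : ContinuousOn ψ s := by
    apply (hfc.pow 2).mul
    apply ContinuousOn.inv₀
    · fun_prop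
    · exact fun x hx => ne_of_gt (h1x2' x hx)
  have hψmono : StrictMonoOn ψ s := by
    apply strictMonoOn_of_deriv_pos (convex_Icc 0 r) hψc
    intro x hx
    rw [hint] at hx
    have hxs : x ∈ s := hIoo_sub hx
    have h1 : (0:ℝ) < 1 - x ^ 2 := h1x2' x hxs
    have hfx : HasDerivAt f (g x) x := by
      have hd := ((hfd x hxs).differentiableAt (hnhds x hx)).hasDerivAt
      rwa [hderiv_f x hx] at hd
    have hq : HasDerivAt (fun y : ℝ => 1 - y ^ 2) (-(2 * x)) x := by
      simpa using ((hasDerivAt_pow 2 x).const_sub 1)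
    have hqi : HasDerivAt (fun y : ℝ => (1 - y ^ 2)⁻¹)
        (-(-(2 * x)) / (1 - x ^ 2) ^ 2) x := by
      simpa [div_eq_mul_inv, Pi.inv_def] using hq.inv (ne_of_gt h1)
    have hψx : HasDerivAt ψ
        ((2 * f x * g x) * (1 - x ^ 2)⁻¹ + f x ^ 2 * (-(-(2 * x)) / (1 - x ^ 2) ^ 2)) x := by
      have hp : HasDerivAt (fun y => f y ^ 2) (2 * f x * g x) x := by
        simpa [mul_comm, mul_assoc, mul_left_comm, Pi.pow_def] using hfx.pow 2
      exact hp.mul hqi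
    rw [hψx.deriv]
    have hk := hkey x ⟨hx.1, hx.2.le⟩
    have hfp := hpos x hxs
    have key2 : 0 < g x * (1 - x ^ 2) + x * f x := by nlinarith
    have h2 : (2 * f x * g x) * (1 - x ^ 2)⁻¹ + f x ^ 2 * (-(-(2 * x)) / (1 - x ^ 2) ^ 2)
        = 2 * f x * (g x * (1 - x ^ 2) + x * f x) / (1 - x ^ 2) ^ 2 := by
      field_simp
    rw [h2]
    positivity
  -- lower bound for f
  intro x hx
  have hxs : x ∈ s := ⟨hx.1.le, hx.2⟩
  have h1 : (0:ℝ) < 1 - x ^ 2 := h1x2 x hx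
  have hψlt : ψ 0 < ψ x := hψmono (left_mem_Icc.2 hr0.le) hxs hx.1
  have hψ0 : ψ 0 = a ^ 2 := by simp [hψdef, hf0]
  have hsq : a ^ 2 * (1 - x ^ 2) < f x ^ 2 := by
    rw [hψ0] at hψlt
    have := (lt_div_iff₀ h1).mp (by rwa [div_eq_mul_inv])
    linarith [this]
  have hfp := hpos x hxs
  have hlow : a * Real.sqrt (1 - x ^ 2) < f x := by
    have h3 : Real.sqrt (a ^ 2 * (1 - x ^ 2)) < Real.sqrt (f x ^ 2) :=
      Real.sqrt_lt_sqrt (by positivity) hsq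
    rwa [Real.sqrt_mul (sq_nonneg a), Real.sqrt_sq ha.le, Real.sqrt_sq hfp.le] at h3
  exact ⟨hlow, hflt x hx, hgbd x hx, hgneg x hx⟩
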